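/- Let Λ be a full rank lattice in ℝ^d with determinant 1, let L be a k-dimensional linear subspace of ℝ^d such that Γ = L ∩ Λ is a lattice of rank k. Then Γ^⊥ = L^⊥ ∩ Λ* is a lattice of rank d - k, and det Γ^⊥ = det Γ. -/

import Mathlib

open Matrix


lemma basis_extension {d k : ℕ} (G : Submodule ℤ (Fin d → ℤ)) (bG : Module.Basis (Fin k) ℤ G)
    (hsat : ∀ (n : ℤ) (x : Fin d → ℤ), n ≠ 0 → n • x ∈ G → x ∈ G) :
    ∃ b : Module.Basis (Fin k ⊕ Fin (d - k)) ℤ (Fin d → ℤ), ∀ i, b (Sum.inl i) = (bG i : Fin d → ℤ) := by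
  classical
  haveI : NoZeroSMulDivisors ℤ ((Fin d → ℤ) ⧸ G) := by
    constructor
    intro n q h
    obtain ⟨x, rfl⟩ := Submodule.mkQ_surjective G q
    by_cases hn : n = 0
    · exact Or.inl hn
    · right
      rw [← _root_.map_smul, Submodule.mkQ_apply, Submodule.Quotient.mk_eq_zero] at h
      rw [Submodule.mkQ_apply, Submodule.Quotient.mk_eq_zero]
      exact hsat n x hn h
  haveI : Module.Finite ℤ ((Fin d → ℤ) ⧸ G) := Module.Finite.quotient ℤ G
  obtain ⟨s, hs⟩ := Module.projective_lifting_property G.mkQ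
    (LinearMap.id : ((Fin d → ℤ) ⧸ G) →ₗ[ℤ] _) (Submodule.mkQ_surjective G)
  have hsec : ∀ q, G.mkQ (s q) = q := fun q => LinearMap.congr_fun hs q
  have hmem : ∀ x : Fin d → ℤ, x - s (G.mkQ x) ∈ G := by
    intro x
    rw [← Submodule.Quotient.mk_eq_zero, ← Submodule.mkQ_apply, map_sub, hsec, sub_self]
  let f : (↥G × ((Fin d → ℤ) ⧸ G)) →ₗ[ℤ] (Fin d → ℤ) :=
    G.subtype.comp (LinearMap.fst ℤ _ _) + s.comp (LinearMap.snd ℤ _ _)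
  let g : (Fin d → ℤ) →ₗ[ℤ] (↥G × ((Fin d → ℤ) ⧸ G)) :=
    LinearMap.prod ((LinearMap.id - s.comp G.mkQ).codRestrict G hmem) G.mkQ
  have hf : ∀ p, f p = (p.1 : Fin d → ℤ) + s p.2 := fun p => rfl
  have hg : ∀ y, g y = (⟨y - s (G.mkQ y), hmem y⟩, G.mkQ y) := fun y => rfl
  have h1 : f.comp g = LinearMap.id := by
    apply LinearMap.ext
    intro y
    simp [hf, hg]
  have h2 : g.comp f = LinearMap.id := by
    apply LinearMap.ext
    intro p
    obtain ⟨x, q⟩ := p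
    have hm : G.mkQ ((x : Fin d → ℤ) + s q) = q := by
      rw [map_add, hsec, Submodule.mkQ_apply, (Submodule.Quotient.mk_eq_zero G).2 x.2, zero_add]
    have : g (f (x, q)) = (x, q) := by
      rw [hf, hg]
      refine Prod.ext (Subtype.ext ?_) hm
      simp [hm]
    simpa using this
  let e : (↥G × ((Fin d → ℤ) ⧸ G)) ≃ₗ[ℤ] (Fin d → ℤ) := LinearEquiv.ofLinear f g h1 h2
  haveI : Module.Free ℤ ↥G := Module.Free.of_basis bG
  have frQ : Module.finrank ℤ ((Fin d → ℤ) ⧸ G) = d - k := by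
    have h3 := e.finrank_eq
    rw [Module.finrank_prod, Module.finrank_eq_card_basis bG] at h3
    simp [Module.finrank_pi] at h3
    omega
  let bQ : Module.Basis (Fin (d - k)) ℤ ((Fin d → ℤ) ⧸ G) :=
    (Module.finBasis ℤ _).reindex (finCongr frQ)
  refine ⟨(bG.prod bQ).map e, fun i => ?_⟩
  simp only [Module.Basis.map_apply, Module.Basis.prod_apply]
  show e (bG i, 0) = _
  rw [LinearEquiv.ofLinear_apply, hf]
  simp

lemma gram_det_ne_zero {d k : ℕ} {v : Fin k → Fin d → ℝ} (hv : LinearIndependent ℝ v) :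
    Matrix.det (Matrix.of fun i i' => ∑ s, v i s * v i' s) ≠ 0 := by
  classical
  intro h
  rw [← Matrix.exists_mulVec_eq_zero_iff] at h
  obtain ⟨y, hy0, hy⟩ := h
  set u : Fin d → ℝ := fun s => ∑ i, y i * v i s with hu
  have h0 : ∑ s, u s * u s = y ⬝ᵥ ((Matrix.of fun i i' => ∑ s, v i s * v i' s).mulVec y) := by
    simp only [hu, dotProduct, Matrix.mulVec, Matrix.of_apply, Finset.mul_sum,
      Finset.sum_mul]
    rw [Finset.sum_comm]
    apply Finset.sum_congr rfl
    intro i _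
    rw [Finset.sum_comm]
    apply Finset.sum_congr rfl
    intro i' _
    apply Finset.sum_congr rfl
    intro s _
    ring
  rw [hy, dotProduct_zero] at h0
  have hus : ∀ s, u s = 0 := by
    intro s
    have := (Finset.sum_eq_zero_iff_of_nonneg (fun s _ => mul_self_nonneg (u s))).1 h0 s
      (Finset.mem_univ s)
    exact mul_self_eq_zero.1 this
  have : ∀ i, y i = 0 := by
    apply Fintype.linearIndependent_iff.1 hv
    funext s
    simpa [Finset.sum_apply] using hus s
  exact hy0 (funext this)

/-- Let Λ = AℤΔ be a full rank lattice in ℝ^d of determinant 1, L a k-dimensional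
subspace such that Γ = L ∩ Λ is a lattice of rank k (with ℤ-basis v).  Then
Γ^⊥ = L^⊥ ∩ Λ* is a lattice of rank d - k (it has a ℤ-basis w), and
det Γ^⊥ = det Γ (expressed as the equality of the Gram determinants of the two
bases). -/
theorem orthogonal_sublattices (d k : ℕ) (hk : k ≤ d)
    (A : Matrix (Fin d) (Fin d) ℝ) (hA : A.det = 1)
    (L : Submodule ℝ (Fin d → ℝ)) (hL : Module.finrank ℝ L = k)
    (v : Fin k → (Fin d → ℝ))
    (hvL : ∀ i, v i ∈ L)
    (hvΛ : ∀ i, ∃ m : Fin d → ℤ, v i = A.mulVec (fun j => (m j : ℝ)))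
    (hvbasis : ∀ x : Fin d → ℝ,
      (∃ m : Fin d → ℤ, x = A.mulVec (fun j => (m j : ℝ))) → x ∈ L →
      ∃! c : Fin k → ℤ, x = ∑ i, (c i : ℝ) • v i) :
    ∃ w : Fin (d - k) → (Fin d → ℝ),
      (∀ j, ∀ u ∈ L, ∑ s, w j s * u s = 0) ∧
      (∀ j, ∀ m : Fin d → ℤ, ∃ z : ℤ,
        ∑ s, w j s * A.mulVec (fun i => (m i : ℝ)) s = (z : ℝ)) ∧
      (∀ x : Fin d → ℝ,
        (∀ m : Fin d → ℤ, ∃ z : ℤ,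
          ∑ s, x s * A.mulVec (fun i => (m i : ℝ)) s = (z : ℝ)) →
        (∀ u ∈ L, ∑ s, x s * u s = 0) →
        ∃! c : Fin (d - k) → ℤ, x = ∑ j, (c j : ℝ) • w j) ∧
      Matrix.det (Matrix.of fun i i' => ∑ s, v i s * v i' s) =
        Matrix.det (Matrix.of fun j j' => ∑ s, w j s * w j' s) := by
  classical
  choose m hm using hvΛ
  -- cast of integer vectors to real vectors
  set c2r : (Fin d → ℤ) → (Fin d → ℝ) := fun x j => (x j : ℝ) with hc2r
  have hc2r_add : ∀ x y, c2r (x + y) = c2r x + c2r y := by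
    intro x y; funext j; simp [hc2r]
  have hc2r_smul : ∀ (n : ℤ) x, c2r (n • x) = (n : ℝ) • c2r x := by
    intro n x; funext j; simp [hc2r]
  have hc2r_inj : Function.Injective c2r := by
    intro x y h
    funext j
    have h2 := congrFun h j
    simp only [hc2r] at h2
    exact_mod_cast h2
  haveI hAinv : Invertible A := A.invertibleOfIsUnitDet (by rw [hA]; exact isUnit_one)
  have hAinj : Function.Injective (fun x : Fin d → ℝ => A.mulVec x) :=
    Matrix.mulVec_injective_of_invertible A
  -- the subgroup of ℤ^d mapping into L
  set G : Submodule ℤ (Fin d → ℤ) :=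
    { carrier := {x | A.mulVec (c2r x) ∈ L}
      add_mem' := by
        intro a b ha hb
        show A.mulVec (c2r (a + b)) ∈ L
        rw [hc2r_add, Matrix.mulVec_add]
        exact L.add_mem ha hb
      zero_mem' := by
        show A.mulVec (c2r 0) ∈ L
        have : c2r 0 = 0 := by funext j; simp [hc2r]
        rw [this, Matrix.mulVec_zero]
        exact L.zero_mem
      smul_mem' := by
        intro n x hx
        show A.mulVec (c2r (n • x)) ∈ L
        rw [hc2r_smul, Matrix.mulVec_smul]
        exact L.smul_mem _ hx } with hG
  have hmemG : ∀ x : Fin d → ℤ, x ∈ G ↔ A.mulVec (c2r x) ∈ L := fun x => Iff.rfl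
  have hmG : ∀ i, m i ∈ G := by
    intro i
    rw [hmemG]
    have : A.mulVec (c2r (m i)) = v i := (hm i).symm
    rw [this]
    exact hvL i
  set mG : Fin k → ↥G := fun i => ⟨m i, hmG i⟩ with hmGdef
  -- key sum computation
  have hsum : ∀ c : Fin k → ℤ, A.mulVec (c2r (∑ i, c i • m i)) = ∑ i, (c i : ℝ) • v i := by
    intro c
    have h1 : c2r (∑ i, c i • m i) = ∑ i, (c i : ℝ) • c2r (m i) := by
      funext j
      simp [hc2r, Finset.sum_apply]
    rw [h1]
    rw [show A.mulVec (∑ i, (c i : ℝ) • c2r (m i)) = ∑ i, (c i : ℝ) • A.mulVec (c2r (m i)) by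
      have h2 := map_sum A.mulVecLin (fun i => (c i : ℝ) • c2r (m i)) Finset.univ
      simp only [_root_.map_smul, Matrix.mulVecLin_apply] at h2
      exact h2]
    exact Finset.sum_congr rfl fun i _ => by rw [← hm i]
  -- uniqueness of integer coordinates
  have huniq0 : ∀ c : Fin k → ℤ, (0 : Fin d → ℝ) = ∑ i, (c i : ℝ) • v i → c = 0 := by
    intro c hc
    obtain ⟨c₀, hc₀, hu⟩ := hvbasis 0 ⟨0, by
      have : c2r 0 = 0 := by funext j; simp [hc2r]
      rw [show (fun j => ((0 : Fin d → ℤ) j : ℝ)) = (0 : Fin d → ℝ) by funext j; simp,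
        Matrix.mulVec_zero]⟩ L.zero_mem
    have h1 := hu c hc
    have h2 := hu 0 (by simp)
    rw [h1, ← h2]
  -- mG is a ℤ-basis of G
  have hli : LinearIndependent ℤ mG := by
    rw [Fintype.linearIndependent_iff]
    intro c hc
    have hc' : (∑ i, c i • m i) = 0 := by
      have := congrArg (Subtype.val) hc
      simpa [hmGdef] using this
    have h0 : (0 : Fin d → ℝ) = ∑ i, (c i : ℝ) • v i := by
      rw [← hsum c, hc']
      have : c2r 0 = 0 := by funext j; simp [hc2r]
      rw [this, Matrix.mulVec_zero]
    have := huniq0 c h0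
    intro i
    exact congrFun this i
  have hspanG : ⊤ ≤ Submodule.span ℤ (Set.range mG) := by
    rintro ⟨x, hx⟩ -
    rw [hmemG] at hx
    obtain ⟨c, hc, -⟩ := hvbasis (A.mulVec (c2r x)) ⟨x, rfl⟩ hx
    have hxc : x = ∑ i, c i • m i := by
      apply hc2r_inj
      apply hAinj
      show A.mulVec (c2r x) = A.mulVec (c2r (∑ i, c i • m i))
      rw [hsum c, ← hc]
    have : (⟨x, hx⟩ : ↥G) = ∑ i, c i • mG i := by
      apply Subtype.ext
      simpa [hmGdef] using hxc
    rw [this]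
    exact Submodule.sum_mem _ fun i _ =>
      Submodule.smul_mem _ _ (Submodule.subset_span ⟨i, rfl⟩)
  set bG : Module.Basis (Fin k) ℤ ↥G := Module.Basis.mk hli hspanG with hbGdef
  have hsat : ∀ (n : ℤ) (x : Fin d → ℤ), n ≠ 0 → n • x ∈ G → x ∈ G := by
    intro n x hn hnx
    rw [hmemG] at hnx ⊢
    rw [hc2r_smul, Matrix.mulVec_smul] at hnx
    have := L.smul_mem ((n : ℝ)⁻¹) hnx
    rwa [smul_smul, inv_mul_cancel₀ (by exact_mod_cast hn), one_smul] at this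
  obtain ⟨b, hb⟩ := basis_extension G bG hsat
  have hb' : ∀ i, b (Sum.inl i) = m i := by
    intro i
    rw [hb i, hbGdef, Module.Basis.mk_apply]
  -- the index equivalence
  set σ : (Fin k ⊕ Fin (d - k)) ≃ Fin d :=
    finSumFinEquiv.trans (finCongr (Nat.add_sub_cancel' hk)) with hσdef
  set b' : Module.Basis (Fin d) ℤ (Fin d → ℤ) := b.reindex σ with hb'def
  have hb'apply : ∀ p : Fin k ⊕ Fin (d - k), b' (σ p) = b p := by
    intro p
    rw [hb'def, Module.Basis.reindex_apply, Equiv.symm_apply_apply]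
  -- the unimodular change of basis matrix
  set U : Matrix (Fin d) (Fin d) ℤ := (Pi.basisFun ℤ (Fin d)).toMatrix b' with hUdef
  have hUentry : ∀ r c, U r c = b' c r := by
    intro r c
    rw [hUdef, Module.Basis.toMatrix_apply, Pi.basisFun_repr]
  haveI iU : Invertible U := (Pi.basisFun ℤ (Fin d)).invertibleToMatrix b'
  set Uinv : Matrix (Fin d) (Fin d) ℤ := ⅟U with hUinvdef
  set Ur : Matrix (Fin d) (Fin d) ℝ := U.map (Int.castRingHom ℝ) with hUrdef
  set Uinvr : Matrix (Fin d) (Fin d) ℝ := Uinv.map (Int.castRingHom ℝ) with hUinvrdef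
  have hUr1 : Ur * Uinvr = 1 := by
    rw [hUrdef, hUinvrdef, ← Matrix.map_mul, mul_invOf_self]
    simp
  have hUr2 : Uinvr * Ur = 1 := by
    rw [hUrdef, hUinvrdef, ← Matrix.map_mul, invOf_mul_self]
    simp
  haveI iUr : Invertible Ur := ⟨Uinvr, hUr2, hUr1⟩
  set B : Matrix (Fin d) (Fin d) ℝ := A * Ur with hBdef
  haveI iB : Invertible B := invertibleMul A Ur
  set Binv : Matrix (Fin d) (Fin d) ℝ := ⅟B with hBinvdef
  have hB1 : B * Binv = 1 := mul_invOf_self B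
  have hB2 : Binv * B = 1 := invOf_mul_self B
  -- columns of B
  have hcolB : ∀ c, (fun r => B r c) = A.mulVec (c2r (b' c)) := by
    intro c
    funext r
    simp [hBdef, Matrix.mul_apply, Matrix.mulVec, dotProduct, hUrdef, hUentry, hc2r]
  have hv_col : ∀ i r, B r (σ (Sum.inl i)) = v i r := by
    intro i r
    have h1 := congrFun (hcolB (σ (Sum.inl i))) r
    rw [h1, hb'apply, hb' i, ← hm i]
  -- the dual vectors
  set w : Fin (d - k) → (Fin d → ℝ) := fun j r => Binv (σ (Sum.inr j)) r with hwdef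
  have hBinvB : ∀ a c, ∑ s, Binv a s * B s c = if a = c then 1 else 0 := by
    intro a c
    have h1 := congrFun (congrFun hB2 a) c
    simpa [Matrix.mul_apply, Matrix.one_apply] using h1
  have hBBinv : ∀ a c, ∑ s, B a s * Binv s c = if a = c then 1 else 0 := by
    intro a c
    have h1 := congrFun (congrFun hB1 a) c
    simpa [Matrix.mul_apply, Matrix.one_apply] using h1
  have hortho_v : ∀ j i, ∑ s, w j s * v i s = 0 := by
    intro j i
    have h1 : ∀ s, v i s = B s (σ (Sum.inl i)) := fun s => (hv_col i s).symm
    calc ∑ s, w j s * v i s = ∑ s, Binv (σ (Sum.inr j)) s * B s (σ (Sum.inl i)) := by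
          apply Finset.sum_congr rfl; intro s _; rw [← h1 s]
      _ = 0 := by
          rw [hBinvB]
          rw [if_neg]
          simp only [EmbeddingLike.apply_eq_iff_eq]
          exact Sum.inr_ne_inl
  -- linear independence of v over ℝ
  have hvli : LinearIndependent ℝ v := by
    rw [Fintype.linearIndependent_iff]
    intro a ha
    set avec : Fin d → ℝ := fun r => Sum.elim a (fun _ => (0 : ℝ)) (σ.symm r) with havec
    have hmv : B.mulVec avec = 0 := by
      funext r
      show ∑ c, B r c * avec c = 0
      rw [← Equiv.sum_comp σ (fun c => B r c * avec c), Fintype.sum_sum_type]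
      simp only [havec, Equiv.symm_apply_apply, Sum.elim_inl, Sum.elim_inr, mul_zero,
        Finset.sum_const_zero, add_zero]
      have := congrFun ha r
      simpa [Finset.sum_apply, hv_col, mul_comm] using this
    have havec0 : avec = 0 := by
      apply Matrix.mulVec_injective_of_invertible B
      rw [hmv, Matrix.mulVec_zero]
    intro i
    have := congrFun havec0 (σ (Sum.inl i))
    simpa [havec] using this
  have hLspan : L = Submodule.span ℝ (Set.range v) := by
    symm
    apply Submodule.eq_of_le_of_finrank_le
    · rw [Submodule.span_le]
      rintro x ⟨i, rfl⟩
      exact hvL i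
    · rw [hL, finrank_span_eq_card hvli, Fintype.card_fin]
  -- Goal 1
  have goal1 : ∀ j, ∀ u ∈ L, ∑ s, w j s * u s = 0 := by
    intro j u hu
    rw [hLspan] at hu
    induction hu using Submodule.span_induction with
    | mem x h =>
        obtain ⟨i, rfl⟩ := h
        exact hortho_v j i
    | zero => simp
    | add x y hx hy ihx ihy =>
        simp only [Pi.add_apply, mul_add, Finset.sum_add_distrib, ihx, ihy, add_zero]
    | smul a x hx ih =>
        simp only [Pi.smul_apply, smul_eq_mul]
        calc ∑ s, w j s * (a * x s) = a * ∑ s, w j s * x s := by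
              rw [Finset.mul_sum]; apply Finset.sum_congr rfl; intro s _; ring
          _ = 0 := by rw [ih, mul_zero]
  -- Binv * A = Uinvr
  have hBinvA : Binv * A = Uinvr := by
    calc Binv * A = Binv * A * (Ur * Uinvr) := by rw [hUr1, mul_one]
      _ = Binv * (A * Ur) * Uinvr := by rw [mul_assoc, mul_assoc, mul_assoc]
      _ = Uinvr := by rw [← hBdef, hB2, one_mul]
  -- Goal 2
  have goal2 : ∀ j, ∀ n : Fin d → ℤ, ∃ z : ℤ,
      ∑ s, w j s * A.mulVec (fun i => (n i : ℝ)) s = (z : ℝ) := by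
    intro j n
    refine ⟨∑ t, Uinv (σ (Sum.inr j)) t * n t, ?_⟩
    have h1 : ∑ s, w j s * A.mulVec (fun i => (n i : ℝ)) s
        = ((Binv * A).mulVec (fun i => (n i : ℝ))) (σ (Sum.inr j)) := by
      rw [← Matrix.mulVec_mulVec]
      rfl
    rw [h1, hBinvA]
    push_cast
    simp [hUinvrdef, Matrix.mulVec, dotProduct]
  -- linear independence of w over ℝ
  have hwli : ∀ a : Fin (d - k) → ℝ, (∀ r, ∑ j, a j * w j r = 0) → a = 0 := by
    intro a ha
    set avec : Fin d → ℝ := fun r => Sum.elim (fun _ => (0 : ℝ)) a (σ.symm r) with havec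
    have hvm : Matrix.vecMul avec Binv = 0 := by
      funext r
      show ∑ c, avec c * Binv c r = 0
      rw [← Equiv.sum_comp σ (fun c => avec c * Binv c r), Fintype.sum_sum_type]
      simp only [havec, Equiv.symm_apply_apply, Sum.elim_inl, Sum.elim_inr, zero_mul,
        Finset.sum_const_zero, zero_add]
      exact ha r
    have havec0 : avec = 0 := by
      have h2 : Matrix.vecMul (Matrix.vecMul avec Binv) B = Matrix.vecMul avec (Binv * B) :=
        Matrix.vecMul_vecMul avec Binv B
      rw [hvm, hB2, Matrix.vecMul_one, Matrix.zero_vecMul] at h2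
      exact h2.symm
    funext j
    have := congrFun havec0 (σ (Sum.inr j))
    simpa [havec] using this
  -- Goal 3
  have goal3 : ∀ x : Fin d → ℝ,
      (∀ n : Fin d → ℤ, ∃ z : ℤ,
        ∑ s, x s * A.mulVec (fun i => (n i : ℝ)) s = (z : ℝ)) →
      (∀ u ∈ L, ∑ s, x s * u s = 0) →
      ∃! c : Fin (d - k) → ℤ, x = ∑ j, (c j : ℝ) • w j := by
    intro x hint horth
    have hx_inl : ∀ i, ∑ s, x s * B s (σ (Sum.inl i)) = 0 := by
      intro i
      have h1 : ∀ s, B s (σ (Sum.inl i)) = v i s := fun s => hv_col i s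
      calc ∑ s, x s * B s (σ (Sum.inl i)) = ∑ s, x s * v i s := by
            apply Finset.sum_congr rfl; intro s _; rw [h1 s]
        _ = 0 := horth (v i) (hvL i)
    have hx_inr : ∀ j, ∃ z : ℤ, ∑ s, x s * B s (σ (Sum.inr j)) = (z : ℝ) := by
      intro j
      obtain ⟨z, hz⟩ := hint (b' (σ (Sum.inr j)))
      refine ⟨z, ?_⟩
      rw [← hz]
      apply Finset.sum_congr rfl
      intro s _
      rw [congrFun (hcolB (σ (Sum.inr j))) s]
    choose z hz using hx_inr
    have key : ∀ r, x r = ∑ a, (∑ s, x s * B s a) * Binv a r := by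
      intro r
      have h3 : x r = ∑ s, x s * ∑ a, B s a * Binv a r := by
        have h4 : ∀ s, ∑ a, B s a * Binv a r = if s = r then 1 else 0 := fun s => hBBinv s r
        simp only [h4]
        simp
      rw [h3]
      simp only [Finset.mul_sum, Finset.sum_mul]
      rw [Finset.sum_comm]
      apply Finset.sum_congr rfl
      intro a _
      apply Finset.sum_congr rfl
      intro s _
      ring
    have hxw : x = ∑ j, ((z j : ℝ)) • w j := by
      funext r
      rw [key r, ← Equiv.sum_comp σ (fun a => (∑ s, x s * B s a) * Binv a r),
        Fintype.sum_sum_type]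
      simp only [hx_inl, zero_mul, Finset.sum_const_zero, zero_add]
      simp only [Finset.sum_apply, Pi.smul_apply, smul_eq_mul]
      refine Finset.sum_congr rfl fun j _ => ?_
      rw [hz j]
    refine ⟨z, hxw, ?_⟩
    intro c hc
    have hdiff : ∀ r, ∑ j, ((c j : ℝ) - (z j : ℝ)) * w j r = 0 := by
      intro r
      have h5 : ∑ j, (c j : ℝ) * w j r = ∑ j, (z j : ℝ) * w j r := by
        have := congrFun hc r
        have h6 := congrFun hxw r
        simp only [Finset.sum_apply, Pi.smul_apply, smul_eq_mul] at this h6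
        rw [← this, ← h6]
      simp only [sub_mul, Finset.sum_sub_distrib, h5, sub_self]
    have h7 := hwli (fun j => (c j : ℝ) - (z j : ℝ)) hdiff
    funext j
    have := congrFun h7 j
    simp only [Pi.zero_apply, sub_eq_zero] at this
    exact_mod_cast this
  -- Gram matrices
  set Gv : Matrix (Fin k) (Fin k) ℝ := Matrix.of fun i i' => ∑ s, v i s * v i' s with hGvdef
  set Gw : Matrix (Fin (d - k)) (Fin (d - k)) ℝ :=
    Matrix.of fun j j' => ∑ s, w j s * w j' s with hGwdef
  set MM : Matrix (Fin d) (Fin d) ℝ := Matrix.of fun r c => Sum.elim v w (σ.symm c) r with hMMdef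
  have hMM_inl : ∀ i r, MM r (σ (Sum.inl i)) = v i r := by
    intro i r; simp [hMMdef]
  have hMM_inr : ∀ j r, MM r (σ (Sum.inr j)) = w j r := by
    intro j r; simp [hMMdef]
  set CC : Matrix (Fin (d - k)) (Fin k) ℝ :=
    Matrix.of fun j i => ∑ s, B s (σ (Sum.inr j)) * MM s (σ (Sum.inl i)) with hCCdef
  have hN1 : ((Bᵀ * MM).submatrix σ σ) = Matrix.fromBlocks Gv 0 CC 1 := by
    ext p q
    cases p with
    | inl i' =>
      cases q with
      | inl i =>
        show ∑ s, Bᵀ (σ (Sum.inl i')) s * MM s (σ (Sum.inl i)) = Gv i' i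
        simp only [Matrix.transpose_apply, hMM_inl, hGvdef, Matrix.of_apply]
        exact Finset.sum_congr rfl fun s _ => by rw [hv_col i' s]
      | inr j =>
        show ∑ s, Bᵀ (σ (Sum.inl i')) s * MM s (σ (Sum.inr j)) = 0
        simp only [Matrix.transpose_apply, hMM_inr]
        calc ∑ s, B s (σ (Sum.inl i')) * w j s = ∑ s, w j s * v i' s := by
              exact Finset.sum_congr rfl fun s _ => by rw [hv_col i' s]; ring
          _ = 0 := hortho_v j i'
    | inr j' =>
      cases q with
      | inl i =>
        show ∑ s, Bᵀ (σ (Sum.inr j')) s * MM s (σ (Sum.inl i)) = CC j' i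
        simp only [Matrix.transpose_apply, hCCdef, Matrix.of_apply]
      | inr j =>
        show ∑ s, Bᵀ (σ (Sum.inr j')) s * MM s (σ (Sum.inr j)) = (1 : Matrix _ _ ℝ) j' j
        simp only [Matrix.transpose_apply, hMM_inr]
        calc ∑ s, B s (σ (Sum.inr j')) * w j s
            = ∑ s, Binv (σ (Sum.inr j)) s * B s (σ (Sum.inr j')) := by
              exact Finset.sum_congr rfl fun s _ => by rw [hwdef]; ring
          _ = if σ (Sum.inr j) = σ (Sum.inr j') then 1 else 0 := hBinvB _ _
          _ = (1 : Matrix _ _ ℝ) j' j := by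
              rw [Matrix.one_apply]
              simp only [EmbeddingLike.apply_eq_iff_eq, Sum.inr.injEq]
              by_cases h : j = j'
              · simp [h]
              · rw [if_neg h, if_neg (fun hh => h hh.symm)]
  have hE1 : B.det * MM.det = Gv.det := by
    have h1 : (Bᵀ * MM).det = Gv.det := by
      rw [← Matrix.det_submatrix_equiv_self σ, hN1, Matrix.det_fromBlocks_zero₁₂,
        Matrix.det_one, mul_one]
    have h2 : (Bᵀ * MM).det = Bᵀ.det * MM.det := Matrix.det_mul _ _
    have h3 : Bᵀ.det = B.det := Matrix.det_transpose B
    rw [← h1, h2, h3]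
  have hN2 : ((MMᵀ * MM).submatrix σ σ) = Matrix.fromBlocks Gv 0 0 Gw := by
    ext p q
    cases p with
    | inl i' =>
      cases q with
      | inl i =>
        show ∑ s, MMᵀ (σ (Sum.inl i')) s * MM s (σ (Sum.inl i)) = Gv i' i
        simp only [Matrix.transpose_apply, hMM_inl, hGvdef, Matrix.of_apply]
      | inr j =>
        show ∑ s, MMᵀ (σ (Sum.inl i')) s * MM s (σ (Sum.inr j)) = 0
        simp only [Matrix.transpose_apply, hMM_inl, hMM_inr]
        calc ∑ s, v i' s * w j s = ∑ s, w j s * v i' s :=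
              Finset.sum_congr rfl fun s _ => mul_comm _ _
          _ = 0 := hortho_v j i'
    | inr j' =>
      cases q with
      | inl i =>
        show ∑ s, MMᵀ (σ (Sum.inr j')) s * MM s (σ (Sum.inl i)) = 0
        simp only [Matrix.transpose_apply, hMM_inl, hMM_inr]
        exact hortho_v j' i
      | inr j =>
        show ∑ s, MMᵀ (σ (Sum.inr j')) s * MM s (σ (Sum.inr j)) = Gw j' j
        simp only [Matrix.transpose_apply, hMM_inr, hGwdef, Matrix.of_apply]
  have hE2 : MM.det * MM.det = Gv.det * Gw.det := by
    have h1 : (MMᵀ * MM).det = Gv.det * Gw.det := by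
      rw [← Matrix.det_submatrix_equiv_self σ, hN2, Matrix.det_fromBlocks_zero₁₂]
    have h2 : (MMᵀ * MM).det = MMᵀ.det * MM.det := Matrix.det_mul _ _
    have h3 : MMᵀ.det = MM.det := Matrix.det_transpose MM
    rw [← h1, h2, h3]
  have hdetB : B.det * B.det = 1 := by
    have h1 : B.det = ((U.det : ℤ) : ℝ) := by
      rw [hBdef, Matrix.det_mul, hA, one_mul, hUrdef]
      exact (RingHom.map_det (Int.castRingHom ℝ) U).symm
    have h2 : IsUnit U.det := Matrix.isUnit_det_of_invertible U
    rcases Int.isUnit_iff.1 h2 with h | h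
    · rw [h1, h]; norm_num
    · rw [h1, h]; norm_num
  have hGvne : Gv.det ≠ 0 := gram_det_ne_zero hvli
  have hfinal : Gv.det = Gw.det := by
    have h9 : (B.det * MM.det) * (B.det * MM.det) = Gv.det * Gv.det := by rw [hE1]
    have h10 : MM.det * MM.det = Gv.det * Gv.det := by
      calc MM.det * MM.det = (B.det * B.det) * (MM.det * MM.det) := by rw [hdetB, one_mul]
        _ = (B.det * MM.det) * (B.det * MM.det) := by ring
        _ = Gv.det * Gv.det := h9
    have h11 : Gv.det * Gw.det = Gv.det * Gv.det := by rw [← hE2, h10]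
    exact (mul_left_cancel₀ hGvne h11).symm
  exact ⟨w, goal1, goal2, goal3, hfinal⟩
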